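/- Let p be prime and s, u nonnegative integers. The smallest integer ℓ ≥ p^u + 1 such that p^s divides C(ℓ, p^u) is ℓ = p^{s+u}. -/

import Mathlib

theorem stmt_5 (p : ℕ) (hp : p.Prime) (s u : ℕ) :
    (∀ ℓ : ℕ, p ^ u + 1 ≤ ℓ → ℓ < p ^ (s + u) → ¬ (p ^ s ∣ Nat.choose ℓ (p ^ u))) ∧
      p ^ s ∣ Nat.choose (p ^ (s + u)) (p ^ u) := by
  haveI : Fact p.Prime := ⟨hp⟩
  have hp2 : 2 ≤ p := hp.two_le
  have hpu : 0 < p ^ u := pow_pos (by omega) u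
  constructor
  · intro ℓ hl1 hl2 hdvd
    have hs : 1 ≤ s := by
      rcases Nat.eq_zero_or_pos s with rfl | h
      · rw [zero_add] at hl2; omega
      · exact h
    have hl0 : ℓ ≠ 0 := by omega
    have hC : Nat.choose ℓ (p ^ u) ≠ 0 :=
      (Nat.choose_pos (by omega : p ^ u ≤ ℓ)).ne'
    have hs_le : s ≤ padicValNat p (Nat.choose ℓ (p ^ u)) := by
      rcases (padicValNat_dvd_iff s (Nat.choose ℓ (p ^ u))).mp hdvd with h | h
      · exact absurd h hC
      · exact h
    have hlog : Nat.log p ℓ < s + u := Nat.log_lt_of_lt_pow hl0 hl2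
    rw [padicValNat_choose (by omega : p ^ u ≤ ℓ) hlog] at hs_le
    have hsub : ((Finset.Ico 1 (s + u)).filter
        fun i => p ^ i ≤ p ^ u % p ^ i + (ℓ - p ^ u) % p ^ i) ⊆ Finset.Ico (u + 1) (s + u) := by
      intro i hi
      simp only [Finset.mem_filter, Finset.mem_Ico] at hi ⊢
      obtain ⟨⟨hi1, hi2⟩, hcond⟩ := hi
      refine ⟨?_, hi2⟩
      by_contra h
      have hiu : i ≤ u := by omega
      have h1 : p ^ u % p ^ i = 0 := Nat.mod_eq_zero_of_dvd (pow_dvd_pow p hiu)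
      have h2 : (ℓ - p ^ u) % p ^ i < p ^ i := Nat.mod_lt _ (pow_pos (by omega) i)
      omega
    have hcard := Finset.card_le_card hsub
    rw [Nat.card_Ico] at hcard
    omega
  · have key := Nat.add_one_mul_choose_eq (p ^ (s + u) - 1) (p ^ u - 1)
    have h1 : p ^ (s + u) - 1 + 1 = p ^ (s + u) := by
      have : 0 < p ^ (s + u) := pow_pos (by omega) _; omega
    have h2 : p ^ u - 1 + 1 = p ^ u := by omega
    rw [h1, h2] at key
    have hdvd : p ^ s * p ^ u ∣ Nat.choose (p ^ (s + u)) (p ^ u) * p ^ u := by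
      rw [← pow_add, ← key]
      exact Dvd.intro _ rfl
    exact (Nat.mul_dvd_mul_iff_right hpu).mp hdvd
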